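/- Alignment lower bound (key inequality in the proof of Lemma 5). Let G, F⋆ ∈ ℂ^{N×r} and suppose F⋆ᴴG is Hermitian positive semidefinite. Set Δ = G − F⋆. Then ‖G·Gᴴ − F⋆·F⋆ᴴ‖_F² ≥ 2(√2 − 1)·Re tr((F⋆ᴴF⋆)·(ΔᴴΔ)). In particular, ‖G·Gᴴ − F⋆·F⋆ᴴ‖_F² ≥ 2(√2 − 1)·σ_min(F⋆)²·‖Δ‖_F². -/

import Mathlib

open Matrix
open scoped BigOperators ComplexOrder

noncomputable section

/-- Frobenius norm of a complex matrix. -/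
def frobNorm {m n : ℕ} (A : Matrix (Fin m) (Fin n) ℂ) : ℝ :=
  Real.sqrt (∑ i, ∑ j, ‖A i j‖ ^ 2)

/-- Euclidean (ℓ₂) norm of a complex vector. -/
def vecNorm {n : ℕ} (v : Fin n → ℂ) : ℝ :=
  Real.sqrt (∑ i, ‖v i‖ ^ 2)

/-- Smallest singular value of a complex matrix: infimum of `‖Av‖₂` over unit vectors `v`. -/
def sigmaMin {m n : ℕ} (A : Matrix (Fin m) (Fin n) ℂ) : ℝ :=
  sInf {t : ℝ | ∃ v : Fin n → ℂ, vecNorm v = 1 ∧ t = vecNorm (A.mulVec v)}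

lemma frobNorm_nonneg {m n : ℕ} (A : Matrix (Fin m) (Fin n) ℂ) : 0 ≤ frobNorm A :=
  Real.sqrt_nonneg _

lemma frobNorm_sq {m n : ℕ} (A : Matrix (Fin m) (Fin n) ℂ) :
    frobNorm A ^ 2 = ∑ i, ∑ j, ‖A i j‖ ^ 2 :=
  Real.sq_sqrt (Finset.sum_nonneg fun _ _ => Finset.sum_nonneg fun _ _ => by positivity)

lemma re_trace_conjT_mul {m n : ℕ} (A : Matrix (Fin m) (Fin n) ℂ) :
    (Matrix.trace (Aᴴ * A)).re = frobNorm A ^ 2 := by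
  rw [frobNorm_sq]
  simp only [Matrix.trace, Matrix.diag, Matrix.mul_apply, Matrix.conjTranspose_apply]
  rw [Finset.sum_comm]
  simp [Complex.re_sum, ← Complex.normSq_eq_norm_sq, Complex.normSq_eq_conj_mul_self]

  simp [Complex.normSq_apply]

lemma re_trace_psd_mul_nonneg {n : ℕ} {A B : Matrix (Fin n) (Fin n) ℂ}
    (hA : A.PosSemidef) (hB : B.PosSemidef) : 0 ≤ (Matrix.trace (A * B)).re := by
  obtain ⟨X, hX⟩ : ∃ X : Matrix (Fin n) (Fin n) ℂ, A = Xᴴ * X := by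
    open scoped MatrixOrder Matrix.Norms.L2Operator in
    obtain ⟨B, hB⟩ := CStarAlgebra.nonneg_iff_eq_star_mul_self.mp hA.nonneg
    exact ⟨B, hB⟩
  have h1 : Matrix.trace (A * B) = Matrix.trace (X * B * Xᴴ) := by
    rw [hX, Matrix.mul_assoc, Matrix.trace_mul_comm, Matrix.mul_assoc]
  have hC : (X * B * Xᴴ).PosSemidef := hB.mul_mul_conjTranspose_same X
  rw [h1]
  have : ∀ i, 0 ≤ ((X * B * Xᴴ) i i).re := by
    intro i
    have h2 := hC.dotProduct_mulVec_nonneg (Pi.single i 1)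
    simp only [dotProduct, Matrix.mulVec, Pi.star_apply, Pi.single_apply] at h2
    simp only [Complex.le_def] at h2
    convert h2.1 using 2
    all_goals simp [dotProduct, Finset.mul_sum, apply_ite, Finset.sum_ite_eq',
      Finset.sum_ite_eq, ite_mul]
  calc (0:ℝ) ≤ ∑ i, ((X * B * Xᴴ) i i).re := Finset.sum_nonneg fun i _ => this i
    _ = _ := by simp [Matrix.trace, Matrix.diag, Complex.re_sum]

lemma neg_frob_le_re_trace_mul {r : ℕ} (H S : Matrix (Fin r) (Fin r) ℂ) :
    -(frobNorm H * frobNorm S) ≤ (Matrix.trace (H * S)).re := by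
  have cs := Real.sum_mul_le_sqrt_mul_sqrt (Finset.univ : Finset (Fin r × Fin r))
    (fun p => ‖H p.1 p.2‖) (fun p => ‖S p.2 p.1‖)
  have e1 : Real.sqrt (∑ p : Fin r × Fin r, ‖H p.1 p.2‖ ^ 2) = frobNorm H := by
    rw [frobNorm, Fintype.sum_prod_type]
  have e2 : Real.sqrt (∑ p : Fin r × Fin r, ‖S p.2 p.1‖ ^ 2) = frobNorm S := by
    rw [frobNorm, Fintype.sum_prod_type, Finset.sum_comm]
  have e3 : (Matrix.trace (H * S)).re = ∑ p : Fin r × Fin r, (H p.1 p.2 * S p.2 p.1).re := by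
    simp [Matrix.trace, Matrix.diag, Matrix.mul_apply, Complex.re_sum, Fintype.sum_prod_type]
  rw [e3]
  calc -(frobNorm H * frobNorm S)
      ≤ -(∑ p : Fin r × Fin r, ‖H p.1 p.2‖ * ‖S p.2 p.1‖) := by
        rw [neg_le_neg_iff]; rw [← e1, ← e2]; exact cs
    _ = ∑ p : Fin r × Fin r, -(‖H p.1 p.2‖ * ‖S p.2 p.1‖) := by rw [Finset.sum_neg_distrib]
    _ ≤ ∑ p : Fin r × Fin r, (H p.1 p.2 * S p.2 p.1).re := by
        apply Finset.sum_le_sum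
        intro p _
        calc -(‖H p.1 p.2‖ * ‖S p.2 p.1‖) = -‖H p.1 p.2 * S p.2 p.1‖ := by rw [norm_mul]
          _ ≤ _ := by exact neg_le_of_abs_le (Complex.abs_re_le_norm _)

lemma vecNorm_nonneg {n : ℕ} (v : Fin n → ℂ) : 0 ≤ vecNorm v := Real.sqrt_nonneg _

lemma vecNorm_sq {n : ℕ} (v : Fin n → ℂ) : vecNorm v ^ 2 = ∑ i, ‖v i‖ ^ 2 :=
  Real.sq_sqrt (Finset.sum_nonneg fun _ _ => by positivity)

lemma vecNorm_smul {n : ℕ} (a : ℂ) (v : Fin n → ℂ) :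
    vecNorm (a • v) = ‖a‖ * vecNorm v := by
  unfold vecNorm
  have : ∀ i : Fin n, ‖(a • v) i‖ ^ 2 = ‖a‖ ^ 2 * ‖v i‖ ^ 2 := by
    intro i; simp [norm_mul]; ring
  simp_rw [this, ← Finset.mul_sum]
  rw [Real.sqrt_mul (by positivity), Real.sqrt_sq (norm_nonneg a)]

lemma sigmaMin_bddBelow {m n : ℕ} (A : Matrix (Fin m) (Fin n) ℂ) :
    BddBelow {t : ℝ | ∃ v : Fin n → ℂ, vecNorm v = 1 ∧ t = vecNorm (A.mulVec v)} :=
  ⟨0, fun t ht => by obtain ⟨v, _, rfl⟩ := ht; exact vecNorm_nonneg _⟩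

lemma sigmaMin_nonneg {m n : ℕ} (A : Matrix (Fin m) (Fin n) ℂ) : 0 ≤ sigmaMin A := by
  unfold sigmaMin
  by_cases h : {t : ℝ | ∃ v : Fin n → ℂ, vecNorm v = 1 ∧ t = vecNorm (A.mulVec v)}.Nonempty
  · exact le_csInf h (fun t ht => by obtain ⟨v, _, rfl⟩ := ht; exact vecNorm_nonneg _)
  · rw [Set.not_nonempty_iff_eq_empty.mp h, Real.sInf_empty]

lemma sigmaMin_mul_le {m n : ℕ} (A : Matrix (Fin m) (Fin n) ℂ) (v : Fin n → ℂ) :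
    sigmaMin A * vecNorm v ≤ vecNorm (A.mulVec v) := by
  by_cases hv : vecNorm v = 0
  · rw [hv, mul_zero]; exact vecNorm_nonneg _
  · have hc : 0 < vecNorm v := lt_of_le_of_ne (vecNorm_nonneg v) (Ne.symm hv)
    set c := vecNorm v with hcdef
    have hw : vecNorm ((((c : ℝ) : ℂ)⁻¹) • v) = 1 := by
      rw [vecNorm_smul, norm_inv, Complex.norm_real, Real.norm_of_nonneg hc.le,
        inv_mul_cancel₀ hv]
    have hmem : vecNorm (A.mulVec ((((c : ℝ) : ℂ)⁻¹) • v)) ∈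
        {t : ℝ | ∃ w : Fin n → ℂ, vecNorm w = 1 ∧ t = vecNorm (A.mulVec w)} :=
      ⟨_, hw, rfl⟩
    have h1 : sigmaMin A ≤ vecNorm (A.mulVec ((((c : ℝ) : ℂ)⁻¹) • v)) :=
      csInf_le (sigmaMin_bddBelow A) hmem
    rw [Matrix.mulVec_smul, vecNorm_smul, norm_inv, Complex.norm_real,
      Real.norm_of_nonneg hc.le] at h1
    calc sigmaMin A * c ≤ (c⁻¹ * vecNorm (A.mulVec v)) * c :=
          mul_le_mul_of_nonneg_right h1 hc.le
      _ = vecNorm (A.mulVec v) := by field_simp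

/-- Alignment lower bound (key inequality in the proof of Lemma 5): if `F⋆ᴴG` is
Hermitian positive semidefinite and `Δ = G − F⋆`, then
`‖GGᴴ − F⋆F⋆ᴴ‖_F² ≥ 2(√2−1)·Re tr((F⋆ᴴF⋆)(ΔᴴΔ))`, and in particular
`‖GGᴴ − F⋆F⋆ᴴ‖_F² ≥ 2(√2−1)·σ_min(F⋆)²·‖Δ‖_F²`. -/
theorem alignment_lower_bound (N r : ℕ)
    (G Fs : Matrix (Fin N) (Fin r) ℂ)
    (hpsd : (Fsᴴ * G).PosSemidef) :
    (frobNorm (G * Gᴴ - Fs * Fsᴴ) ^ 2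
        ≥ 2 * (Real.sqrt 2 - 1)
          * (Matrix.trace ((Fsᴴ * Fs) * ((G - Fs)ᴴ * (G - Fs)))).re)
    ∧ frobNorm (G * Gᴴ - Fs * Fsᴴ) ^ 2
        ≥ 2 * (Real.sqrt 2 - 1) * sigmaMin Fs ^ 2 * frobNorm (G - Fs) ^ 2 := by
  set Δ : Matrix (Fin N) (Fin r) ℂ := G - Fs with hΔ
  set H : Matrix (Fin r) (Fin r) ℂ := Fsᴴ * Δ with hHdef
  set P : Matrix (Fin r) (Fin r) ℂ := Fsᴴ * Fs with hPdef
  set S : Matrix (Fin r) (Fin r) ℂ := Δᴴ * Δ with hSdef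
  set M : Matrix (Fin N) (Fin N) ℂ := G * Gᴴ - Fs * Fsᴴ with hMdef0
  clear_value Δ H P S M
  have hherm : (Fsᴴ * G)ᴴ = Fsᴴ * G := hpsd.1
  have h0 : Gᴴ * Fs = Fsᴴ * G := by
    calc Gᴴ * Fs = (Fsᴴ * G)ᴴ := by
          rw [Matrix.conjTranspose_mul, Matrix.conjTranspose_conjTranspose]
      _ = _ := hherm
  have hH : Δᴴ * Fs = H := by
    rw [hHdef, hΔ, Matrix.conjTranspose_sub, Matrix.sub_mul, Matrix.mul_sub, h0]
  have hMdef : M = Fs * Δᴴ + Δ * Fsᴴ + Δ * Δᴴ := by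
    rw [hMdef0, hΔ, Matrix.conjTranspose_sub]
    simp only [Matrix.mul_sub, Matrix.sub_mul]
    abel
  have hMH : Mᴴ = M := by
    rw [hMdef0]
    simp [Matrix.conjTranspose_sub, Matrix.conjTranspose_mul]
  -- the nine trace computations
  have c1 : Matrix.trace ((Fs*Δᴴ) * (Fs*Δᴴ)) = Matrix.trace (H*H) := by
    rw [show (Fs*Δᴴ) * (Fs*Δᴴ) = Fs * (Δᴴ * Fs * Δᴴ) by simp only [Matrix.mul_assoc],
      Matrix.trace_mul_comm,
      show Δᴴ * Fs * Δᴴ * Fs = (Δᴴ * Fs) * (Δᴴ * Fs) by simp only [Matrix.mul_assoc], hH]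
  have c2 : Matrix.trace ((Fs*Δᴴ) * (Δ*Fsᴴ)) = Matrix.trace (P*S) := by
    rw [show (Fs*Δᴴ) * (Δ*Fsᴴ) = Fs * (Δᴴ * Δ * Fsᴴ) by simp only [Matrix.mul_assoc],
      Matrix.trace_mul_comm,
      show Δᴴ * Δ * Fsᴴ * Fs = S * P by rw [hSdef, hPdef]; simp only [Matrix.mul_assoc],
      Matrix.trace_mul_comm]
  have c3 : Matrix.trace ((Fs*Δᴴ) * (Δ*Δᴴ)) = Matrix.trace (H*S) := by
    rw [show (Fs*Δᴴ) * (Δ*Δᴴ) = Fs * (Δᴴ * Δ * Δᴴ) by simp only [Matrix.mul_assoc],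
      Matrix.trace_mul_comm,
      show Δᴴ * Δ * Δᴴ * Fs = S * (Δᴴ * Fs) by rw [hSdef]; simp only [Matrix.mul_assoc], hH,
      Matrix.trace_mul_comm]
  have c4 : Matrix.trace ((Δ*Fsᴴ) * (Fs*Δᴴ)) = Matrix.trace (P*S) := by
    rw [show (Δ*Fsᴴ) * (Fs*Δᴴ) = Δ * (Fsᴴ * Fs * Δᴴ) by simp only [Matrix.mul_assoc],
      Matrix.trace_mul_comm,
      show Fsᴴ * Fs * Δᴴ * Δ = P * S by rw [hSdef, hPdef]; simp only [Matrix.mul_assoc]]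
  have c5 : Matrix.trace ((Δ*Fsᴴ) * (Δ*Fsᴴ)) = Matrix.trace (H*H) := by
    rw [show (Δ*Fsᴴ) * (Δ*Fsᴴ) = Δ * (Fsᴴ * Δ * Fsᴴ) by simp only [Matrix.mul_assoc],
      Matrix.trace_mul_comm,
      show Fsᴴ * Δ * Fsᴴ * Δ = H * H by rw [hHdef]; simp only [Matrix.mul_assoc]]
  have c6 : Matrix.trace ((Δ*Fsᴴ) * (Δ*Δᴴ)) = Matrix.trace (H*S) := by
    rw [show (Δ*Fsᴴ) * (Δ*Δᴴ) = Δ * (Fsᴴ * Δ * Δᴴ) by simp only [Matrix.mul_assoc],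
      Matrix.trace_mul_comm,
      show Fsᴴ * Δ * Δᴴ * Δ = H * S by rw [hHdef, hSdef]; simp only [Matrix.mul_assoc]]
  have c7 : Matrix.trace ((Δ*Δᴴ) * (Fs*Δᴴ)) = Matrix.trace (H*S) := by
    rw [show (Δ*Δᴴ) * (Fs*Δᴴ) = Δ * (Δᴴ * Fs * Δᴴ) by simp only [Matrix.mul_assoc],
      Matrix.trace_mul_comm,
      show Δᴴ * Fs * Δᴴ * Δ = (Δᴴ * Fs) * S by rw [hSdef]; simp only [Matrix.mul_assoc], hH]
  have c8 : Matrix.trace ((Δ*Δᴴ) * (Δ*Fsᴴ)) = Matrix.trace (H*S) := by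
    rw [show (Δ*Δᴴ) * (Δ*Fsᴴ) = Δ * (Δᴴ * Δ * Fsᴴ) by simp only [Matrix.mul_assoc],
      Matrix.trace_mul_comm,
      show Δᴴ * Δ * Fsᴴ * Δ = S * H by rw [hHdef, hSdef]; simp only [Matrix.mul_assoc],
      Matrix.trace_mul_comm]
  have c9 : Matrix.trace ((Δ*Δᴴ) * (Δ*Δᴴ)) = Matrix.trace (S*S) := by
    rw [show (Δ*Δᴴ) * (Δ*Δᴴ) = Δ * (Δᴴ * Δ * Δᴴ) by simp only [Matrix.mul_assoc],
      Matrix.trace_mul_comm,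
      show Δᴴ * Δ * Δᴴ * Δ = S * S by rw [hSdef]; simp only [Matrix.mul_assoc]]
  have key : Matrix.trace (M*M)
      = 2 * Matrix.trace (H*H) + 2 * Matrix.trace (P*S)
        + 4 * Matrix.trace (H*S) + Matrix.trace (S*S) := by
    rw [hMdef]
    simp only [Matrix.add_mul, Matrix.mul_add, Matrix.trace_add]
    rw [c1, c2, c3, c4, c5, c6, c7, c8, c9]
    ring
  -- Hermitian structure
  have hHherm : Hᴴ = H := by
    rw [hHdef, Matrix.conjTranspose_mul, Matrix.conjTranspose_conjTranspose, hH]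
    exact hHdef
  have hSherm : Sᴴ = S := by
    rw [hSdef, Matrix.conjTranspose_mul, Matrix.conjTranspose_conjTranspose]
  -- real quantities
  have hM2 : frobNorm M ^ 2 = (Matrix.trace (M*M)).re := by
    rw [← re_trace_conjT_mul M, hMH]
  have hH2 : (Matrix.trace (H*H)).re = frobNorm H ^ 2 := by
    rw [← re_trace_conjT_mul H, hHherm]
  have hS2 : (Matrix.trace (S*S)).re = frobNorm S ^ 2 := by
    rw [← re_trace_conjT_mul S, hSherm]
  have hkeyre : frobNorm M ^ 2
      = 2 * frobNorm H ^ 2 + 2 * (Matrix.trace (P*S)).re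
        + 4 * (Matrix.trace (H*S)).re + frobNorm S ^ 2 := by
    rw [hM2, key]
    simp only [Complex.add_re, Complex.mul_re, Complex.re_ofNat, Complex.im_ofNat,
      zero_mul, sub_zero]
    rw [← hH2, ← hS2]
  have hSpsd : S.PosSemidef := by
    rw [hSdef]; exact Matrix.posSemidef_conjTranspose_mul_self Δ
  have hPpsd : P.PosSemidef := by
    rw [hPdef]; exact Matrix.posSemidef_conjTranspose_mul_self Fs
  have hp : 0 ≤ (Matrix.trace (P*S)).re := re_trace_psd_mul_nonneg hPpsd hSpsd
  have hPH : P + H = Fsᴴ * G := by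
    rw [hPdef, hHdef, hΔ]
    simp only [Matrix.mul_sub]
    abel
  have hpy : 0 ≤ (Matrix.trace (P*S)).re + (Matrix.trace (H*S)).re := by
    have h1 : 0 ≤ (Matrix.trace ((P + H) * S)).re := by
      rw [hPH]; exact re_trace_psd_mul_nonneg hpsd hSpsd
    rwa [Matrix.add_mul, Matrix.trace_add, Complex.add_re] at h1
  have hcs : -(frobNorm H * frobNorm S) ≤ (Matrix.trace (H*S)).re :=
    neg_frob_le_re_trace_mul H S
  have hsqrt2 : (1:ℝ) ≤ Real.sqrt 2 := by
    rw [show (1:ℝ) = Real.sqrt 1 by simp]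
    exact Real.sqrt_le_sqrt (by norm_num)
  have hsqrt2' : Real.sqrt 2 ≤ 2 := by
    nlinarith [Real.sq_sqrt (by norm_num : (0:ℝ) ≤ 2), Real.sqrt_nonneg 2]
  have hamgm : 2 * Real.sqrt 2 * (frobNorm H * frobNorm S)
      ≤ 2 * frobNorm H ^ 2 + frobNorm S ^ 2 := by
    nlinarith [sq_nonneg (Real.sqrt 2 * frobNorm H - frobNorm S),
      Real.sq_sqrt (by norm_num : (0:ℝ) ≤ 2)]
  have f3 : 0 ≤ Real.sqrt 2 * (frobNorm H * frobNorm S + (Matrix.trace (H*S)).re) :=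
    mul_nonneg (Real.sqrt_nonneg 2) (by linarith)
  have f4 : 0 ≤ (2 - Real.sqrt 2) * ((Matrix.trace (H*S)).re + (Matrix.trace (P*S)).re) :=
    mul_nonneg (by linarith) (by linarith)
  have goal1 : frobNorm M ^ 2 ≥ 2 * (Real.sqrt 2 - 1) * (Matrix.trace (P*S)).re := by
    linarith [hkeyre, hp, hpy, f3, f4, hamgm]
  refine ⟨goal1, ?_⟩
  -- second part
  have hpsig : sigmaMin Fs ^ 2 * frobNorm Δ ^ 2 ≤ (Matrix.trace (P*S)).re := by
    have e1 : (Matrix.trace (P*S)).re = frobNorm (Fs * Δᴴ) ^ 2 := by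
      rw [← c4]
      rw [show (Δ*Fsᴴ) * (Fs*Δᴴ) = (Fs * Δᴴ)ᴴ * (Fs * Δᴴ) by
        rw [Matrix.conjTranspose_mul, Matrix.conjTranspose_conjTranspose]]
      exact re_trace_conjT_mul _
    have e2 : frobNorm (Fs * Δᴴ) ^ 2
        = ∑ j, vecNorm (Fs.mulVec (fun k => Δᴴ k j)) ^ 2 := by
      rw [frobNorm_sq, Finset.sum_comm]
      refine Finset.sum_congr rfl fun j _ => ?_
      rw [vecNorm_sq]
      refine Finset.sum_congr rfl fun i _ => ?_
      simp [Matrix.mul_apply, Matrix.mulVec, dotProduct]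
    have e3 : ∑ j, vecNorm (fun k => Δᴴ k j) ^ 2 = frobNorm Δ ^ 2 := by
      rw [frobNorm_sq]
      refine Finset.sum_congr rfl fun j _ => ?_
      rw [vecNorm_sq]
      refine Finset.sum_congr rfl fun k _ => ?_
      rw [Matrix.conjTranspose_apply]
      simp
    rw [e1, e2, ← e3, Finset.mul_sum]
    refine Finset.sum_le_sum fun j _ => ?_
    have h1 := sigmaMin_mul_le Fs (fun k => Δᴴ k j)
    calc sigmaMin Fs ^ 2 * vecNorm (fun k => Δᴴ k j) ^ 2
        = (sigmaMin Fs * vecNorm (fun k => Δᴴ k j)) ^ 2 := by ring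
      _ ≤ vecNorm (Fs.mulVec (fun k => Δᴴ k j)) ^ 2 := by
          apply pow_le_pow_left₀ (mul_nonneg (sigmaMin_nonneg Fs) (vecNorm_nonneg _)) h1
  have hc0 : 0 ≤ 2 * (Real.sqrt 2 - 1) := by linarith
  calc frobNorm M ^ 2 ≥ 2 * (Real.sqrt 2 - 1) * (Matrix.trace (P*S)).re := goal1
    _ ≥ 2 * (Real.sqrt 2 - 1) * (sigmaMin Fs ^ 2 * frobNorm Δ ^ 2) :=
        mul_le_mul_of_nonneg_left hpsig hc0
    _ = 2 * (Real.sqrt 2 - 1) * sigmaMin Fs ^ 2 * frobNorm Δ ^ 2 := by ring
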